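/- Let p be a partial assignment on a set D of cells of an n×m Slant board whose diagonal graph G(p) is acyclic, and let c be a cell not in D. Then there exists a Boolean value b such that the partial assignment on D ∪ {c} extending p by assigning b to c has an acyclic diagonal graph; equivalently, at most one of the two diagonal choices for c creates a cycle. -/

import Mathlib

/-!
Slant boards.

An `n×m` Slant board has cells indexed by `Fin n × Fin m` and vertices indexed by
`Fin (n+1) × Fin (m+1)`.  The four corners of cell `(i,j)` are the vertices
`(i,j)`, `(i+1,j)`, `(i,j+1)`, `(i+1,j+1)`.  A full assignment is a function from
cells to `Bool`: `true` means the cell contains the diagonal joining its two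
corners with even coordinate sums, `false` the other diagonal.
-/

namespace SlantAux

abbrev Pt := ℤ × ℤ
abbrev Step := Pt × Pt

def IsStep (s : Step) : Prop :=
  (s.1.2 = s.2.2 ∧ (s.2.1 = s.1.1 + 2 ∨ s.1.1 = s.2.1 + 2)) ∨
  (s.1.1 = s.2.1 ∧ (s.2.2 = s.1.2 + 2 ∨ s.1.2 = s.2.2 + 2))

def cr (q : Pt) (s : Step) : Prop := s.1.2 = s.2.2 ∧ s.1.1 + s.2.1 = 2*q.1 ∧ s.1.2 < q.2
def crossMid (M : Pt) (s : Step) : Prop := s.1.1 + s.2.1 = 2*M.1 ∧ s.1.2 + s.2.2 = 2*M.2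
def inR (q : Pt) (r : Pt) : Prop := r.1 = q.1 + 1 ∧ r.2 < q.2

instance (q s) : Decidable (cr q s) := by unfold cr; infer_instance
instance (M s) : Decidable (crossMid M s) := by unfold crossMid; infer_instance
instance (q r) : Decidable (inR q r) := by unfold inR; infer_instance
instance (s) : Decidable (IsStep s) := by unfold IsStep; infer_instance

def ind (P : Prop) [Decidable P] : ℕ := if P then 1 else 0

def Good (q : Pt) (s : Step) : Prop :=
  IsStep s ∧ s.1.1 % 2 ≠ q.1 % 2 ∧ s.1.2 % 2 ≠ q.2 % 2

lemma dartH (q : Pt) (s : Step) (h : Good q s) :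
    (ind (cr q s) + ind (cr (q.1+2, q.2) s) + ind (crossMid (q.1+1, q.2) s)
      + ind (inR q s.1) + ind (inR q s.2)) % 2 = 0 := by
  obtain ⟨hs, h1, h2⟩ := h
  unfold IsStep at hs
  unfold ind
  split_ifs <;> unfold cr crossMid inR at * <;> dsimp only at * <;> omega

lemma dartV (q : Pt) (s : Step) (h : Good q s) :
    (ind (cr q s) + ind (cr (q.1, q.2-2) s) + ind (crossMid (q.1, q.2-1) s)) % 2 = 0 := by
  obtain ⟨hs, h1, h2⟩ := h
  unfold IsStep at hs
  unfold ind
  split_ifs <;> unfold cr crossMid at * <;> dsimp only at * <;> omega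

def F (L : List Step) (q : Pt) : ℕ := L.countP fun s => decide (cr q s)
def CM (L : List Step) (M : Pt) : ℕ := L.countP fun s => decide (crossMid M s)
def C1 (L : List Step) (q : Pt) : ℕ := L.countP fun s => decide (inR q s.1)
def C2 (L : List Step) (q : Pt) : ℕ := L.countP fun s => decide (inR q s.2)

lemma listH0 (q : Pt) (L : List Step) (h : ∀ s ∈ L, Good q s) :
    (F L q + F L (q.1+2, q.2) + CM L (q.1+1, q.2) + C1 L q + C2 L q) % 2 = 0 := by
  induction L with
  | nil => simp [F, CM, C1, C2]
  | cons a l ih =>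
    have ha := dartH q a (h a (by simp))
    have hl := ih (fun s hs => h s (by simp [hs]))
    simp only [F, CM, C1, C2, List.countP_cons] at *
    unfold ind at ha
    simp only [decide_eq_true_eq]
    omega

lemma listV (q : Pt) (L : List Step) (h : ∀ s ∈ L, Good q s) :
    (F L q + F L (q.1, q.2-2) + CM L (q.1, q.2-1)) % 2 = 0 := by
  induction L with
  | nil => simp [F, CM]
  | cons a l ih =>
    have ha := dartV q a (h a (by simp))
    have hl := ih (fun s hs => h s (by simp [hs]))
    simp only [F, CM, List.countP_cons] at *
    unfold ind at ha
    simp only [decide_eq_true_eq]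
    omega

lemma listH (q : Pt) (L : List Step) (h : ∀ s ∈ L, Good q s)
    (hperm : (L.map Prod.fst).Perm (L.map Prod.snd)) :
    (F L q + F L (q.1+2, q.2) + CM L (q.1+1, q.2)) % 2 = 0 := by
  have h0 := listH0 q L h
  have hC : C1 L q = C2 L q := by
    have e1 : C1 L q = (L.map Prod.fst).countP (fun r => decide (inR q r)) := by
      rw [List.countP_map]; rfl
    have e2 : C2 L q = (L.map Prod.snd).countP (fun r => decide (inR q r)) := by
      rw [List.countP_map]; rfl
    rw [e1, e2, hperm.countP_eq]
  omega

end SlantAux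

namespace Slant

abbrev Cell (n m : ℕ) := Fin n × Fin m
abbrev Vertex (n m : ℕ) := Fin (n + 1) × Fin (m + 1)

variable {n m : ℕ}

def corner00 (c : Cell n m) : Vertex n m := (c.1.castSucc, c.2.castSucc)
def corner10 (c : Cell n m) : Vertex n m := (c.1.succ, c.2.castSucc)
def corner01 (c : Cell n m) : Vertex n m := (c.1.castSucc, c.2.succ)
def corner11 (c : Cell n m) : Vertex n m := (c.1.succ, c.2.succ)

/-- The endpoints of the diagonal of cell `c` joining the two corners whose
coordinate sums are even. -/
def evenDiag (c : Cell n m) : Vertex n m × Vertex n m :=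
  if (c.1.val + c.2.val) % 2 = 0 then (corner00 c, corner11 c) else (corner10 c, corner01 c)

/-- The endpoints of the diagonal of cell `c` joining the two corners whose
coordinate sums are odd. -/
def oddDiag (c : Cell n m) : Vertex n m × Vertex n m :=
  if (c.1.val + c.2.val) % 2 = 0 then (corner10 c, corner01 c) else (corner00 c, corner11 c)

/-- The endpoints of the diagonal chosen in cell `c` by the assignment value `b`. -/
def diagEnds (c : Cell n m) (b : Bool) : Vertex n m × Vertex n m :=
  if b then evenDiag c else oddDiag c

/-- The diagonal graph of the (partial) assignment `p`, using only the cells in `D`: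
two vertices are adjacent iff the chosen diagonal of some cell in `D` joins them.
For a full assignment take `D = Set.univ`. -/
def DiagGraph (D : Set (Cell n m)) (p : Cell n m → Bool) : SimpleGraph (Vertex n m) :=
  SimpleGraph.fromRel (fun u v => ∃ c ∈ D, diagEnds c (p c) = (u, v))

/-- `v` is one of the four corners of cell `c`. -/
def isCorner (v : Vertex n m) (c : Cell n m) : Prop :=
  v = corner00 c ∨ v = corner10 c ∨ v = corner01 c ∨ v = corner11 c

/-- The chosen diagonal of cell `c` under assignment `f` passes through vertex `v`. -/
def passesThrough (f : Cell n m → Bool) (c : Cell n m) (v : Vertex n m) : Prop :=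
  (diagEnds c (f c)).1 = v ∨ (diagEnds c (f c)).2 = v

/-- The degree of a vertex in a graph on the board's vertices. -/
noncomputable def deg (G : SimpleGraph (Vertex n m)) (v : Vertex n m) : ℕ :=
  (G.neighborSet v).ncard

open SlantAux

def phi (v : Vertex n m) : ℤ × ℤ := ((v.1 : ℤ) + (v.2 : ℤ), (v.1 : ℤ) - (v.2 : ℤ))

def isHoriz (c : Cell n m) (b : Bool) : Prop := (b = true ↔ (c.1.val + c.2.val) % 2 = 0)

lemma phi_corner00 (c : Cell n m) : phi (corner00 c) = ((c.1 : ℤ) + c.2, (c.1 : ℤ) - c.2) := by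
  simp only [phi, corner00, Fin.coe_castSucc]
lemma phi_corner11 (c : Cell n m) : phi (corner11 c) = ((c.1 : ℤ) + c.2 + 2, (c.1 : ℤ) - c.2) := by
  simp only [phi, corner11, Fin.val_succ, Prod.mk.injEq]
  push_cast; constructor <;> ring
lemma phi_corner10 (c : Cell n m) : phi (corner10 c) = ((c.1 : ℤ) + c.2 + 1, (c.1 : ℤ) - c.2 + 1) := by
  simp only [phi, corner10, Fin.val_succ, Fin.coe_castSucc, Prod.mk.injEq]
  push_cast; constructor <;> ring
lemma phi_corner01 (c : Cell n m) : phi (corner01 c) = ((c.1 : ℤ) + c.2 + 1, (c.1 : ℤ) - c.2 - 1) := by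
  simp only [phi, corner01, Fin.val_succ, Fin.coe_castSucc, Prod.mk.injEq]
  push_cast; constructor <;> ring

lemma adj_char {D : Set (Cell n m)} {p : Cell n m → Bool} {u v : Vertex n m}
    (h : (DiagGraph D p).Adj u v) :
    ∃ c' ∈ D, ∃ a b : ℤ, a = (c'.1 : ℤ) + c'.2 ∧ b = (c'.1 : ℤ) - c'.2 ∧
      ((isHoriz c' (p c') ∧ ((phi u = (a, b) ∧ phi v = (a+2, b)) ∨ (phi v = (a, b) ∧ phi u = (a+2, b)))) ∨
       (¬ isHoriz c' (p c') ∧ ((phi u = (a+1, b+1) ∧ phi v = (a+1, b-1)) ∨ (phi v = (a+1, b+1) ∧ phi u = (a+1, b-1))))) := by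
  rw [DiagGraph, SimpleGraph.fromRel_adj] at h
  obtain ⟨hne, h | h⟩ := h <;> obtain ⟨c', hc', hends⟩ := h <;>
    refine ⟨c', hc', (c'.1 : ℤ) + c'.2, (c'.1 : ℤ) - c'.2, rfl, rfl, ?_⟩ <;>
    rcases hb : p c' with _ | _ <;> by_cases hpar : (c'.1.val + c'.2.val) % 2 = 0 <;>
    · simp only [diagEnds, evenDiag, oddDiag, hb, hpar, if_true, if_false, if_pos, if_neg,
        Bool.false_eq_true, not_false_iff, Prod.mk.injEq] at hends
      obtain ⟨h1, h2⟩ := hends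
      subst h1; subst h2
      simp only [isHoriz, hb, phi_corner00, phi_corner11, phi_corner10, phi_corner01]
      tauto

/-- Derived arithmetic form. -/
lemma adj_mid {D : Set (Cell n m)} {p : Cell n m → Bool} {u v : Vertex n m}
    (h : (DiagGraph D p).Adj u v) :
    ∃ c' ∈ D,
      (phi u).1 + (phi v).1 = 2*((c'.1 : ℤ) + c'.2) + 2 ∧
      (phi u).2 + (phi v).2 = 2*((c'.1 : ℤ) - c'.2) ∧
      ((phi u).2 = (phi v).2 ↔ isHoriz c' (p c')) ∧
      IsStep (phi u, phi v) := by
  obtain ⟨c', hc', a, b, ha, hb, hcase⟩ := adj_char h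
  refine ⟨c', hc', ?_⟩
  have step : ∀ x y : ℤ × ℤ, IsStep (x, y) ↔
      ((x.2 = y.2 ∧ (y.1 = x.1 + 2 ∨ x.1 = y.1 + 2)) ∨
       (x.1 = y.1 ∧ (y.2 = x.2 + 2 ∨ x.2 = y.2 + 2))) := by
    intro x y; unfold IsStep; rfl
  rcases hcase with ⟨hh, hp | hp⟩ | ⟨hh, hp | hp⟩ <;>
    obtain ⟨h1, h2⟩ := hp <;> rw [Prod.ext_iff] at h1 h2 <;>
    obtain ⟨hu1, hu2⟩ := h1 <;> obtain ⟨hv1, hv2⟩ := h2 <;>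
    simp only at hu1 hu2 hv1 hv2 <;> rw [step]
  · exact ⟨by omega, by omega, by rw [hu2, hv2]; exact iff_of_true rfl hh, by omega⟩
  · exact ⟨by omega, by omega, by rw [hu2, hv2]; exact iff_of_true rfl hh, by omega⟩
  · exact ⟨by omega, by omega, by rw [hu2, hv2]; exact iff_of_false (by omega) hh, by omega⟩
  · exact ⟨by omega, by omega, by rw [hu2, hv2]; exact iff_of_false (by omega) hh, by omega⟩

lemma cell_eq {c1 c2 : Cell n m}
    (h1 : (c1.1 : ℤ) + c1.2 = (c2.1 : ℤ) + c2.2) (h2 : (c1.1 : ℤ) - c1.2 = (c2.1 : ℤ) - c2.2) :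
    c1 = c2 := by
  have e1 : (c1.1 : ℤ) = c2.1 := by omega
  have e2 : (c1.2 : ℤ) = c2.2 := by omega
  have e1' : (c1.1 : Fin n) = c2.1 := by
    apply Fin.ext; exact_mod_cast e1
  have e2' : (c1.2 : Fin m) = c2.2 := by
    apply Fin.ext; exact_mod_cast e2
  exact Prod.ext e1' e2'

lemma step_parity {a b : ℤ × ℤ} (h : IsStep (a, b)) :
    a.1 % 2 = b.1 % 2 ∧ a.2 % 2 = b.2 % 2 := by
  unfold IsStep at h; simp only at h; omega

lemma support_parity {D : Set (Cell n m)} {p : Cell n m → Bool} {x y : Vertex n m}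
    (W : (DiagGraph D p).Walk x y) :
    ∀ v ∈ W.support, (phi v).1 % 2 = (phi x).1 % 2 ∧ (phi v).2 % 2 = (phi x).2 % 2 := by
  induction W with
  | nil => intro v hv; simp at hv; subst hv; exact ⟨rfl, rfl⟩
  | @cons u u' w h W ih =>
    intro v hv
    rw [SimpleGraph.Walk.support_cons] at hv
    rcases List.mem_cons.mp hv with hv | hv
    · subst hv; exact ⟨rfl, rfl⟩
    · obtain ⟨_, _, _, _, _, hstep⟩ := adj_mid h
      have hpar := step_parity hstep
      have := ih v hv
      constructor <;> omega

lemma no_both {D : Set (Cell n m)} {p : Cell n m → Bool} {c : Cell n m} (hc : c ∉ D)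
    (hH : (DiagGraph D p).Reachable (corner00 c) (corner11 c))
    (hV : (DiagGraph D p).Reachable (corner10 c) (corner01 c)) : False := by
  classical
  obtain ⟨W1⟩ := hH
  obtain ⟨W2⟩ := hV
  set L0 : List Step := W1.darts.map (fun d => (phi d.fst, phi d.snd)) with hL0
  set L : List Step := L0 ++ [(phi (corner11 c), phi (corner00 c))] with hL
  have hA : phi (corner00 c) = ((c.1 : ℤ) + c.2, (c.1 : ℤ) - c.2) := phi_corner00 c
  have hB : phi (corner11 c) = ((c.1 : ℤ) + c.2 + 2, (c.1 : ℤ) - c.2) := phi_corner11 c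
  have hC : phi (corner10 c) = ((c.1 : ℤ) + c.2 + 1, (c.1 : ℤ) - c.2 + 1) := phi_corner10 c
  have hD : phi (corner01 c) = ((c.1 : ℤ) + c.2 + 1, (c.1 : ℤ) - c.2 - 1) := phi_corner01 c
  -- basic facts about elements of L
  have hsup1 := support_parity W1
  have hLbasic : ∀ s ∈ L, IsStep s ∧ s.1.1 % 2 = ((c.1 : ℤ) + c.2) % 2 ∧
      s.1.2 % 2 = ((c.1 : ℤ) - c.2) % 2 := by
    intro s hs
    rw [hL, List.mem_append] at hs
    rcases hs with hs | hs
    · rw [hL0, List.mem_map] at hs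
      obtain ⟨d, hd, rfl⟩ := hs
      obtain ⟨c2, hc2, e1, e2, e3, hstep⟩ := adj_mid d.adj
      have hm := hsup1 d.fst (SimpleGraph.Walk.dart_fst_mem_support_of_mem_darts W1 hd)
      rw [hA] at hm
      exact ⟨hstep, by simpa using hm.1, by simpa using hm.2⟩
    · rw [List.mem_singleton] at hs
      subst hs
      refine ⟨?_, ?_, ?_⟩
      · unfold IsStep; rw [hA, hB]; dsimp only; omega
      · rw [hB]; dsimp only; omega
      · rw [hB]
  have hLgood : ∀ q : Pt, q.1 % 2 ≠ ((c.1 : ℤ) + c.2) % 2 → q.2 % 2 ≠ ((c.1 : ℤ) - c.2) % 2 →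
      ∀ s ∈ L, Good q s := by
    intro q h1 h2 s hs
    obtain ⟨hst, hp1, hp2⟩ := hLbasic s hs
    exact ⟨hst, by omega, by omega⟩
  -- cell data for steps coming from the walk
  have hcellL0 : ∀ s ∈ L0, ∃ c' ∈ D, s.1.1 + s.2.1 = 2*((c'.1 : ℤ) + c'.2) + 2 ∧
      s.1.2 + s.2.2 = 2*((c'.1 : ℤ) - c'.2) ∧ (s.1.2 = s.2.2 ↔ isHoriz c' (p c')) := by
    intro s hs
    rw [hL0, List.mem_map] at hs
    obtain ⟨d, hd, rfl⟩ := hs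
    obtain ⟨c2, hc2, e1, e2, e3, hstep⟩ := adj_mid d.adj
    exact ⟨c2, hc2, e1, e2, e3⟩
  -- the closed-curve permutation property
  have hperm : (L.map Prod.fst).Perm (L.map Prod.snd) := by
    have e1 : L.map Prod.fst = W1.support.map phi := by
      rw [hL, List.map_append, hL0, List.map_map]
      have : (Prod.fst ∘ fun d : (DiagGraph D p).Dart => (phi d.fst, phi d.snd)) =
          (phi ∘ fun d : (DiagGraph D p).Dart => d.fst) := rfl
      rw [this, ← List.map_map, ← SimpleGraph.Walk.map_fst_darts_append W1, List.map_append]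
      rfl
    have e2 : L.map Prod.snd = W1.support.tail.map phi ++ [phi (corner00 c)] := by
      rw [hL, List.map_append, hL0, List.map_map]
      have : (Prod.snd ∘ fun d : (DiagGraph D p).Dart => (phi d.fst, phi d.snd)) =
          (phi ∘ fun d : (DiagGraph D p).Dart => d.snd) := rfl
      rw [this, ← List.map_map, SimpleGraph.Walk.map_snd_darts W1]
      rfl
    rw [e1, e2]
    have e3 : W1.support.map phi = phi (corner00 c) :: W1.support.tail.map phi := by
      conv_lhs => rw [W1.support_eq_cons]
      rw [List.map_cons]
    rw [e3]
    exact (List.perm_append_singleton _ _).symm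
  -- no step of L crosses an edge of the graph in the odd class
  have hCM0 : ∀ x y : Vertex n m, (DiagGraph D p).Adj x y →
      (phi x).1 % 2 ≠ ((c.1 : ℤ) + c.2) % 2 → (phi x).2 % 2 ≠ ((c.1 : ℤ) - c.2) % 2 →
      ∀ M : Pt, 2*M.1 = (phi x).1 + (phi y).1 → 2*M.2 = (phi x).2 + (phi y).2 →
      CM L M = 0 := by
    intro x y hadj h1 h2 M hM1 hM2
    obtain ⟨c2, hc2, e1, e2, e3, hstep⟩ := adj_mid hadj
    rw [CM, List.countP_eq_zero]
    intro s hs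
    simp only [decide_eq_true_eq]
    intro hcm
    obtain ⟨hcm1, hcm2⟩ := hcm
    rw [hL, List.mem_append] at hs
    rcases hs with hs | hs
    · obtain ⟨c1, hc1, f1, f2, f3⟩ := hcellL0 s hs
      obtain ⟨hst, hp1, hp2⟩ := hLbasic s (by rw [hL, List.mem_append]; exact Or.inl hs)
      have hcc : c1 = c2 := cell_eq (by omega) (by omega)
      subst hcc
      have hiff : (s.1.2 = s.2.2 ↔ (phi x).2 = (phi y).2) := by rw [f3, e3]
      have hpx := step_parity hstep
      unfold IsStep at hst hstep
      simp only at hst hstep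
      omega
    · rw [List.mem_singleton] at hs
      subst hs
      rw [hB, hA] at hcm1 hcm2
      simp only at hcm1 hcm2
      have : c = c2 := cell_eq (by omega) (by omega)
      exact hc (this ▸ hc2)
  -- the closing edge is the unique crossing of the missing cell's midpoint
  have hCMmid : CM L ((c.1 : ℤ) + c.2 + 1, (c.1 : ℤ) - c.2) = 1 := by
    rw [CM, hL, List.countP_append]
    have hz : List.countP (fun s => decide (crossMid ((c.1 : ℤ) + c.2 + 1, (c.1 : ℤ) - c.2) s)) L0 = 0 := by
      rw [List.countP_eq_zero]
      intro s hs
      simp only [decide_eq_true_eq]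
      intro hcm
      obtain ⟨c1, hc1, f1, f2, f3⟩ := hcellL0 s hs
      obtain ⟨hcm1, hcm2⟩ := hcm
      simp only at hcm1 hcm2
      have : c1 = c := cell_eq (by omega) (by omega)
      exact hc (this ▸ hc1)
    rw [hz]
    have : crossMid ((c.1 : ℤ) + c.2 + 1, (c.1 : ℤ) - c.2) (phi (corner11 c), phi (corner00 c)) := by
      constructor
      · rw [hB, hA]; dsimp only; ring
      · rw [hB, hA]; dsimp only; ring
    simp [List.countP_cons, this]
  -- telescoping along the second walk
  have tele : ∀ (x y : Vertex n m) (W : (DiagGraph D p).Walk x y),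
      (phi x).1 % 2 ≠ ((c.1 : ℤ) + c.2) % 2 → (phi x).2 % 2 ≠ ((c.1 : ℤ) - c.2) % 2 →
      F L (phi x) % 2 = F L (phi y) % 2 := by
    intro x y W
    induction W with
    | nil => intro _ _; rfl
    | @cons u u' w hadj W ih =>
      intro h1 h2
      obtain ⟨c2, hc2, e1, e2, e3, hstep⟩ := adj_mid hadj
      have hpar := step_parity hstep
      have key : F L (phi u) % 2 = F L (phi u') % 2 := by
        have hstep' := hstep
        unfold IsStep at hstep'
        simp only at hstep'
        rcases hstep' with ⟨heq, hr | hr⟩ | ⟨heq, hr | hr⟩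
        · -- u' is to the right of u
          have hl := listH (phi u) L (hLgood (phi u) h1 h2) hperm
          have hM : CM L ((phi u).1 + 1, (phi u).2) = 0 :=
            hCM0 u u' hadj h1 h2 _ (by dsimp only; omega) (by dsimp only; omega)
          have hv : ((phi u).1 + 2, (phi u).2) = phi u' := Prod.ext (by dsimp only; omega) (by dsimp only; omega)
          rw [hv, hM] at hl
          omega
        · -- u' is to the left of u
          have hl := listH (phi u') L (hLgood (phi u') (by omega) (by omega)) hperm
          have hM : CM L ((phi u').1 + 1, (phi u').2) = 0 :=
            hCM0 u u' hadj h1 h2 _ (by dsimp only; omega) (by dsimp only; omega)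
          have hv : ((phi u').1 + 2, (phi u').2) = phi u := Prod.ext (by dsimp only; omega) (by dsimp only; omega)
          rw [hv, hM] at hl
          omega
        · -- u' is above u
          have hl := listV (phi u') L (hLgood (phi u') (by omega) (by omega))
          have hM : CM L ((phi u').1, (phi u').2 - 1) = 0 :=
            hCM0 u u' hadj h1 h2 _ (by dsimp only; omega) (by dsimp only; omega)
          have hv : ((phi u').1, (phi u').2 - 2) = phi u := Prod.ext (by dsimp only; omega) (by dsimp only; omega)
          rw [hv, hM] at hl
          omega
        · -- u' is below u
          have hl := listV (phi u) L (hLgood (phi u) h1 h2)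
          have hM : CM L ((phi u).1, (phi u).2 - 1) = 0 :=
            hCM0 u u' hadj h1 h2 _ (by dsimp only; omega) (by dsimp only; omega)
          have hv : ((phi u).1, (phi u).2 - 2) = phi u' := Prod.ext (by dsimp only; omega) (by dsimp only; omega)
          rw [hv, hM] at hl
          omega
      have := ih (by omega) (by omega)
      omega
  -- final contradiction
  have hpar1 : (phi (corner10 c)).1 % 2 ≠ ((c.1 : ℤ) + c.2) % 2 := by rw [hC]; dsimp only; omega
  have hpar2 : (phi (corner10 c)).2 % 2 ≠ ((c.1 : ℤ) - c.2) % 2 := by rw [hC]; dsimp only; omega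
  have h10 := tele _ _ W2 hpar1 hpar2
  have hlv := listV (phi (corner10 c)) L (hLgood _ hpar1 hpar2)
  have hv1 : ((phi (corner10 c)).1, (phi (corner10 c)).2 - 2) = phi (corner01 c) := by
    simp only [hC, hD]; rw [Prod.mk.injEq]; omega
  have hv2 : ((phi (corner10 c)).1, (phi (corner10 c)).2 - 1) = ((c.1 : ℤ) + c.2 + 1, (c.1 : ℤ) - c.2) := by
    simp only [hC]; rw [Prod.mk.injEq]; omega
  rw [hv1, hv2, hCMmid] at hlv
  omega

lemma sup_edge_reachable {V : Type*} {G : SimpleGraph V} (hG : G.IsAcyclic) {x y : V}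
    (h : ¬ (G ⊔ SimpleGraph.fromEdgeSet {s(x, y)}).IsAcyclic) :
    G.Reachable x y := by
  classical
  rw [SimpleGraph.IsAcyclic] at h
  push_neg at h
  obtain ⟨v, W, hW⟩ := h
  by_cases he : s(x, y) ∈ W.edges
  · have hadj := SimpleGraph.adj_and_reachable_delete_edges_iff_exists_cycle.mpr ⟨v, W, hW, he⟩
    refine hadj.2.mono ?_
    intro a b hab
    rw [SimpleGraph.deleteEdges_adj, SimpleGraph.sup_adj, SimpleGraph.fromEdgeSet_adj] at hab
    tauto
  · exfalso
    have hsub : ∀ e ∈ W.edges, e ∈ G.edgeSet := by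
      intro e hme
      have h2 := SimpleGraph.Walk.edges_subset_edgeSet W hme
      rw [SimpleGraph.edgeSet_sup, SimpleGraph.edgeSet_fromEdgeSet] at h2
      rcases h2 with h2 | h2
      · exact h2
      · exfalso
        obtain ⟨h3, -⟩ := h2
        rw [Set.mem_singleton_iff] at h3
        exact he (h3 ▸ hme)
    exact hG (W.transfer G hsub) (hW.transfer hsub)

lemma diagEnds_ne (c : Cell n m) (b : Bool) : (diagEnds c b).1 ≠ (diagEnds c b).2 := by
  unfold diagEnds evenDiag oddDiag
  split_ifs <;>
    simp only [corner00, corner11, corner10, corner01, ne_eq, Prod.ext_iff, Fin.ext_iff,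
      Fin.coe_castSucc, Fin.val_succ, not_and] <;>
    intro h <;> omega

lemma diagGraph_insert (D : Set (Cell n m)) (p : Cell n m → Bool) (c : Cell n m) (b : Bool)
    (hc : c ∉ D) :
    DiagGraph (insert c D) (Function.update p c b) =
      DiagGraph D p ⊔ SimpleGraph.fromEdgeSet {s((diagEnds c b).1, (diagEnds c b).2)} := by
  ext u v
  simp only [DiagGraph, SimpleGraph.fromRel_adj, SimpleGraph.sup_adj, SimpleGraph.fromEdgeSet_adj,
    Set.mem_singleton_iff, Set.mem_insert_iff]
  constructor
  · rintro ⟨hne, h | h⟩ <;> obtain ⟨c', hc' | hc', hd⟩ := h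
    · subst hc'
      rw [Function.update_self] at hd
      refine Or.inr ⟨?_, hne⟩
      rw [hd]
    · rw [Function.update_of_ne (by rintro rfl; exact hc hc') _ _] at hd
      exact Or.inl ⟨hne, Or.inl ⟨c', hc', hd⟩⟩
    · subst hc'
      rw [Function.update_self] at hd
      refine Or.inr ⟨?_, hne⟩
      rw [hd, Sym2.eq_swap]
    · rw [Function.update_of_ne (by rintro rfl; exact hc hc') _ _] at hd
      exact Or.inl ⟨hne, Or.inr ⟨c', hc', hd⟩⟩
  · rintro (⟨hne, h | h⟩ | ⟨heq, hne⟩)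
    · obtain ⟨c', hc', hd⟩ := h
      refine ⟨hne, Or.inl ⟨c', Or.inr hc', ?_⟩⟩
      rw [Function.update_of_ne (by rintro rfl; exact hc hc') _ _]
      exact hd
    · obtain ⟨c', hc', hd⟩ := h
      refine ⟨hne, Or.inr ⟨c', Or.inr hc', ?_⟩⟩
      rw [Function.update_of_ne (by rintro rfl; exact hc hc') _ _]
      exact hd
    · refine ⟨hne, ?_⟩
      rw [Sym2.eq_iff] at heq
      rcases heq with ⟨h1, h2⟩ | ⟨h1, h2⟩
      · exact Or.inl ⟨c, Or.inl rfl, by rw [Function.update_self]; exact Prod.ext h1.symm h2.symm⟩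
      · exact Or.inr ⟨c, Or.inl rfl, by rw [Function.update_self]; exact Prod.ext h2.symm h1.symm⟩

/-- A partial assignment with acyclic diagonal graph can always be
extended by one more cell without creating a cycle: at most one of the two diagonal
choices creates a cycle. -/
theorem extend_one_cell_acyclic (n m : ℕ) (D : Set (Cell n m)) (p : Cell n m → Bool)
    (hp : (DiagGraph D p).IsAcyclic) (c : Cell n m) (hc : c ∉ D) :
    ∃ b : Bool, (DiagGraph (insert c D) (Function.update p c b)).IsAcyclic := by
  by_contra h
  push_neg at h
  have ht := h true
  have hf := h false
  rw [diagGraph_insert D p c true hc] at ht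
  rw [diagGraph_insert D p c false hc] at hf
  have r1 : (DiagGraph D p).Reachable (diagEnds c true).1 (diagEnds c true).2 :=
    sup_edge_reachable hp ht
  have r2 : (DiagGraph D p).Reachable (diagEnds c false).1 (diagEnds c false).2 :=
    sup_edge_reachable hp hf
  by_cases hpar : (c.1.val + c.2.val) % 2 = 0
  · simp only [diagEnds, evenDiag, oddDiag, if_pos hpar, if_true, Bool.false_eq_true,
      if_false] at r1 r2
    exact no_both hc r1 r2
  · simp only [diagEnds, evenDiag, oddDiag, if_neg hpar, if_true, Bool.false_eq_true,
      if_false] at r1 r2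
    exact no_both hc r2 r1


end Slant
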